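/- Assume α > 0 and −α < m < 0. Let a < 0, b ≥ 0 and d ∈ ℝ with |d|^{n−1}·d > −α·a·b, and let f : ℝ → ℝ solve the power-law ODE on all of [0,∞) with f(0) = a, f'(0) = b, f''(0) = d. Then f has exactly one zero in (0,∞), f(t) → ∞ as t → ∞, and both f'(t) and f''(t) converge to 0 as t → ∞. -/

import Mathlib

open Real Set Filter Topology

/-- The signed power nonlinearity `x ↦ |x|^(n-1) * x`. -/
noncomputable def powLaw (n x : ℝ) : ℝ := |x| ^ (n - 1) * x

/-- `f` solves the power-law ODE `(|f''|^(n-1) f'')' + α f f'' - m (f')² = 0` on `I`: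
`f` is twice continuously differentiable on `I`, `t ↦ |f''(t)|^(n-1) f''(t)` is
differentiable on `I`, and the equation holds on `I`. -/
def SolvesPowerLawODE (n α m : ℝ) (f : ℝ → ℝ) (I : Set ℝ) : Prop :=
  (∀ t ∈ I, DifferentiableAt ℝ f t) ∧
  (∀ t ∈ I, DifferentiableAt ℝ (deriv f) t) ∧
  ContinuousOn (deriv (deriv f)) I ∧
  (∀ t ∈ I, DifferentiableAt ℝ (fun s => powLaw n (deriv (deriv f) s)) t) ∧
  (∀ t ∈ I, deriv (fun s => powLaw n (deriv (deriv f) s)) t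
      + α * f t * deriv (deriv f) t - m * (deriv f t) ^ 2 = 0)

lemma powLaw_zero (n : ℝ) : powLaw n 0 = 0 := by simp [powLaw]

lemma powLaw_of_nonneg {n x : ℝ} (hn : 1 < n) (hx : 0 ≤ x) : powLaw n x = x ^ n := by
  rcases eq_or_lt_of_le hx with h | h
  · rw [← h, powLaw_zero, Real.zero_rpow (by linarith)]
  · rw [powLaw, abs_of_pos h]
    nth_rewrite 2 [← Real.rpow_one x]
    rw [← Real.rpow_add h]
    norm_num

lemma powLaw_neg_eq (n x : ℝ) : powLaw n (-x) = - powLaw n x := by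
  simp [powLaw, abs_neg]

lemma powLaw_strictMono {n : ℝ} (hn : 1 < n) : StrictMono (powLaw n) := by
  intro x y hxy
  rcases le_or_gt 0 x with hx | hx
  · rw [powLaw_of_nonneg hn hx, powLaw_of_nonneg hn (le_of_lt (lt_of_le_of_lt hx hxy))]
    exact Real.rpow_lt_rpow hx hxy (by linarith)
  · rcases le_or_gt 0 y with hy | hy
    · have h1 : powLaw n x < 0 := by
        have : 0 < |x| ^ (n-1) := Real.rpow_pos_of_pos (abs_pos.2 (ne_of_lt hx)) _
        exact mul_neg_of_pos_of_neg this hx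
      have h2 : 0 ≤ powLaw n y := by
        rw [powLaw_of_nonneg hn hy]; exact Real.rpow_nonneg hy _
      linarith
    · have : powLaw n (-y) < powLaw n (-x) := by
        rw [powLaw_of_nonneg hn (by linarith), powLaw_of_nonneg hn (by linarith)]
        exact Real.rpow_lt_rpow (by linarith) (by linarith) (by linarith)
      rw [powLaw_neg_eq, powLaw_neg_eq] at this
      linarith

lemma powLaw_rpow_inv {n c : ℝ} (hn : 1 < n) (hc : 0 < c) : powLaw n (c ^ n⁻¹) = c := by
  have h1 : (0:ℝ) < c ^ n⁻¹ := Real.rpow_pos_of_pos hc _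
  rw [powLaw_of_nonneg hn h1.le, ← Real.rpow_mul hc.le, inv_mul_cancel₀ (by linarith : n ≠ 0),
    Real.rpow_one]

lemma powLaw_pos {n x : ℝ} (hn : 1 < n) (hx : 0 < x) : 0 < powLaw n x := by
  have := powLaw_strictMono hn hx
  rwa [powLaw_zero] at this

lemma powLaw_le_iff {n x y : ℝ} (hn : 1 < n) : powLaw n x ≤ powLaw n y ↔ x ≤ y :=
  (powLaw_strictMono hn).le_iff_le

lemma exists_right_gt_of_deriv_pos {φ : ℝ → ℝ} {t t₂ : ℝ} (hd : DifferentiableAt ℝ φ t)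
    (hpos : 0 < deriv φ t) (ht : t < t₂) : ∃ s, t < s ∧ s < t₂ ∧ φ t < φ s := by
  have hs := hasDerivAt_iff_tendsto_slope.1 hd.hasDerivAt
  have hev : ∀ᶠ s in 𝓝[≠] t, 0 < slope φ t s := hs.eventually (eventually_gt_nhds hpos)
  have hev' : ∀ᶠ s in 𝓝[>] t, 0 < slope φ t s :=
    hev.filter_mono (nhdsWithin_mono t (fun s hs => ne_of_gt hs))
  have hmem : Ioo t t₂ ∈ 𝓝[>] t := Ioo_mem_nhdsGT_of_mem ⟨le_rfl, ht⟩
  obtain ⟨s, hs1, hs2⟩ := (hev'.and (eventually_of_mem hmem (fun x hx => hx))).exists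
  refine ⟨s, hs2.1, hs2.2, ?_⟩
  rw [slope_def_field] at hs1
  have hst : 0 < s - t := by linarith [hs2.1]
  have : 0 < φ s - φ t := by
    have := mul_pos hs1 hst
    rwa [div_mul_cancel₀ _ (ne_of_gt hst)] at this
  linarith

lemma exists_left_lt_of_deriv_pos {φ : ℝ → ℝ} {t t₁ : ℝ} (hd : DifferentiableAt ℝ φ t)
    (hpos : 0 < deriv φ t) (ht : t₁ < t) : ∃ s, t₁ < s ∧ s < t ∧ φ s < φ t := by
  have hs := hasDerivAt_iff_tendsto_slope.1 hd.hasDerivAt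
  have hev : ∀ᶠ s in 𝓝[≠] t, 0 < slope φ t s := hs.eventually (eventually_gt_nhds hpos)
  have hev' : ∀ᶠ s in 𝓝[<] t, 0 < slope φ t s :=
    hev.filter_mono (nhdsWithin_mono t (fun s hs => ne_of_lt hs))
  have hmem : Ioo t₁ t ∈ 𝓝[<] t := Ioo_mem_nhdsLT_of_mem ⟨ht, le_rfl⟩
  obtain ⟨s, hs1, hs2⟩ := (hev'.and (eventually_of_mem hmem (fun x hx => hx))).exists
  refine ⟨s, hs2.1, hs2.2, ?_⟩
  rw [slope_def_field] at hs1
  have hst : s - t < 0 := by linarith [hs2.2]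
  have : φ s - φ t < 0 := by
    by_contra hcon
    push_neg at hcon
    have : (φ s - φ t) / (s - t) ≤ 0 := div_nonpos_of_nonneg_of_nonpos hcon hst.le
    linarith
  linarith

lemma barrier {φ : ℝ → ℝ} {T ε : ℝ}
    (hφ : ∀ t ∈ Ici T, DifferentiableAt ℝ φ t)
    (hkey : ∀ t ∈ Ici T, φ t = ε → 0 < deriv φ t)
    (hT : ε ≤ φ T) : ∀ t ∈ Ici T, ε ≤ φ t := by
  intro t₂ ht₂
  by_contra hcon
  push_neg at hcon
  have hTt₂ : T < t₂ := by
    rcases eq_or_lt_of_le (mem_Ici.1 ht₂) with h | h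
    · exfalso; rw [← h] at hcon; linarith
    · exact h
  have hcontφ : ContinuousOn φ (Icc T t₂) := fun x hx =>
    ((hφ x hx.1).continuousAt).continuousWithinAt
  set S := Icc T t₂ ∩ φ ⁻¹' (Ici ε) with hS
  have hSne : S.Nonempty := ⟨T, ⟨le_rfl, hTt₂.le⟩, hT⟩
  have hSclosed : IsClosed S :=
    hcontφ.preimage_isClosed_of_isClosed isClosed_Icc isClosed_Ici
  have hScompact : IsCompact S :=
    (isCompact_Icc).of_isClosed_subset hSclosed (inter_subset_left)
  set t₀ := sSup S with ht₀def
  have ht₀S : t₀ ∈ S := hScompact.sSup_mem hSne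
  have ht₀T : T ≤ t₀ := ht₀S.1.1
  have ht₀lt : t₀ < t₂ := by
    rcases eq_or_lt_of_le ht₀S.1.2 with h | h
    · exfalso; have := ht₀S.2; rw [h] at this; exact absurd this (not_le.2 hcon)
    · exact h
  have hlt : ∀ s, t₀ < s → s ≤ t₂ → φ s < ε := by
    intro s hs1 hs2
    by_contra hcon2
    push_neg at hcon2
    have : s ∈ S := ⟨⟨le_trans ht₀T hs1.le, hs2⟩, hcon2⟩
    have := le_csSup hScompact.bddAbove this
    linarith
  have hφt₀ : φ t₀ = ε := by
    refine le_antisymm ?_ ht₀S.2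
    have hcont : ContinuousWithinAt φ (Ioi t₀) t₀ :=
      ((hφ t₀ ht₀S.1.1).continuousAt).continuousWithinAt
    have hev : ∀ᶠ s in 𝓝[>] t₀, φ s ≤ ε := by
      filter_upwards [Ioo_mem_nhdsGT_of_mem (⟨le_rfl, ht₀lt⟩ : t₀ ∈ Ico t₀ t₂)] with s hs
      exact (hlt s hs.1 hs.2.le).le
    exact le_of_tendsto hcont hev
  have hderiv := hkey t₀ ht₀S.1.1 hφt₀
  obtain ⟨s, hs1, hs2, hs3⟩ := exists_right_gt_of_deriv_pos (hφ t₀ ht₀S.1.1) hderiv ht₀lt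
  have := hlt s hs1 hs2.le
  rw [hφt₀] at hs3
  linarith

lemma growth_ge {ψ : ℝ → ℝ} {T c : ℝ}
    (hψ : ∀ t ∈ Ici T, DifferentiableAt ℝ ψ t)
    (hc : ∀ t ∈ Ici T, c ≤ deriv ψ t) :
    ∀ t ∈ Ici T, ψ T + c * (t - T) ≤ ψ t := by
  have hmono : MonotoneOn (fun t => ψ t - c * t) (Ici T) := by
    apply monotoneOn_of_deriv_nonneg (convex_Ici T)
    · exact fun x hx => (((hψ x hx).sub (by fun_prop)).continuousAt).continuousWithinAt
    · intro x hx
      rw [interior_Ici] at hx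
      exact ((hψ x (le_of_lt (mem_Ioi.1 hx))).sub (by fun_prop)).differentiableWithinAt
    · intro x hx
      rw [interior_Ici] at hx
      have hd : HasDerivAt (fun t => ψ t - c * t) (deriv ψ x - c) x := by
        exact ((hψ x (le_of_lt (mem_Ioi.1 hx))).hasDerivAt.sub ((hasDerivAt_id x).const_mul c)).congr_deriv (by simp)
      rw [hd.deriv]
      linarith [hc x (le_of_lt (mem_Ioi.1 hx))]
  intro t ht
  have := hmono (self_mem_Ici) ht ht
  simp only at this
  linarith

lemma growth_le {ψ : ℝ → ℝ} {T c : ℝ}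
    (hψ : ∀ t ∈ Ici T, DifferentiableAt ℝ ψ t)
    (hc : ∀ t ∈ Ici T, deriv ψ t ≤ c) :
    ∀ t ∈ Ici T, ψ t ≤ ψ T + c * (t - T) := by
  have hmono : AntitoneOn (fun t => ψ t - c * t) (Ici T) := by
    apply antitoneOn_of_deriv_nonpos (convex_Ici T)
    · exact fun x hx => (((hψ x hx).sub (by fun_prop)).continuousAt).continuousWithinAt
    · intro x hx
      rw [interior_Ici] at hx
      exact ((hψ x (le_of_lt (mem_Ioi.1 hx))).sub (by fun_prop)).differentiableWithinAt
    · intro x hx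
      rw [interior_Ici] at hx
      have hd : HasDerivAt (fun t => ψ t - c * t) (deriv ψ x - c) x := by
        exact ((hψ x (le_of_lt (mem_Ioi.1 hx))).hasDerivAt.sub ((hasDerivAt_id x).const_mul c)).congr_deriv (by simp)
      rw [hd.deriv]
      linarith [hc x (le_of_lt (mem_Ioi.1 hx))]
  intro t ht
  have := hmono (self_mem_Ici) ht ht
  simp only at this
  linarith

set_option maxHeartbeats 2000000 in
theorem stmt_9 (n α m : ℝ) (hn : 1 < n) (hα : 0 < α) (hm₁ : -α < m) (hm₂ : m < 0)
    (f : ℝ → ℝ) (a b d : ℝ)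
    (ha : a < 0) (hb : 0 ≤ b) (hd : |d| ^ (n - 1) * d > -α * a * b)
    (hf : SolvesPowerLawODE n α m f (Set.Ici 0))
    (hf0 : f 0 = a) (hf0' : deriv f 0 = b) (hf0'' : deriv (deriv f) 0 = d) :
    (∃! t : ℝ, 0 < t ∧ f t = 0) ∧
    Filter.Tendsto f Filter.atTop Filter.atTop ∧
    Filter.Tendsto (deriv f) Filter.atTop (nhds 0) ∧
    Filter.Tendsto (deriv (deriv f)) Filter.atTop (nhds 0) := by
  obtain ⟨hdf, hdf1, hcf2, hdH, heqn⟩ := hf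
  set H : ℝ → ℝ := fun s => powLaw n (deriv (deriv f) s) with hHdef
  set G : ℝ → ℝ := fun s => H s + α * f s * deriv f s with hGdef
  have hαm : 0 < α + m := by linarith
  have hEpos : 0 < powLaw n d + α * a * b := by
    have : powLaw n d > -α * a * b := hd
    linarith
  set E := powLaw n d + α * a * b with hEdef
  -- derivative of G
  have hG : ∀ t ∈ Ici (0:ℝ), HasDerivAt G ((α + m) * (deriv f t)^2) t := by
    intro t ht
    have h1 : HasDerivAt f (deriv f t) t := (hdf t ht).hasDerivAt
    have h2 : HasDerivAt (deriv f) (deriv (deriv f) t) t := (hdf1 t ht).hasDerivAt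
    have h3 : HasDerivAt H (deriv H t) t := (hdH t ht).hasDerivAt
    have h4 := h3.add ((h1.const_mul α).mul h2)
    refine h4.congr_deriv ?_
    have heq := heqn t ht
    have hderivH : deriv H t = m * (deriv f t)^2 - α * f t * deriv (deriv f) t := by
      rw [hHdef]; linarith [heq]
    rw [hderivH]; ring
  have hGdiff : ∀ t ∈ Ici (0:ℝ), DifferentiableAt ℝ G t :=
    fun t ht => (hG t ht).differentiableAt
  have hGderiv : ∀ t ∈ Ici (0:ℝ), deriv G t = (α + m) * (deriv f t)^2 :=
    fun t ht => (hG t ht).deriv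
  have hGmono : MonotoneOn G (Ici (0:ℝ)) := by
    apply monotoneOn_of_deriv_nonneg (convex_Ici 0)
    · exact fun x hx => ((hGdiff x hx).continuousAt).continuousWithinAt
    · intro x hx; rw [interior_Ici] at hx
      exact (hGdiff x (le_of_lt (mem_Ioi.1 hx))).differentiableWithinAt
    · intro x hx; rw [interior_Ici] at hx
      rw [hGderiv x (le_of_lt (mem_Ioi.1 hx))]
      positivity
  have hG0 : G 0 = E := by
    rw [hGdef, hEdef]; simp only [hf0, hf0', hf0'', hHdef]
  have hkeyIneq : ∀ t ∈ Ici (0:ℝ), E ≤ powLaw n (deriv (deriv f) t) + α * f t * deriv f t := by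
    intro t ht
    have := hGmono self_mem_Ici ht ht
    rw [hG0] at this
    exact this
  -- positivity of f'' when f * f' ≤ 0
  have hf2pos : ∀ t ∈ Ici (0:ℝ), α * f t * deriv f t ≤ 0 → 0 < deriv (deriv f) t := by
    intro t ht hprod
    have h1 := hkeyIneq t ht
    have h2 : 0 < powLaw n (deriv (deriv f) t) := by linarith
    by_contra hcon
    push_neg at hcon
    have : powLaw n (deriv (deriv f) t) ≤ powLaw n 0 := (powLaw_le_iff hn).2 hcon
    rw [powLaw_zero] at this
    linarith
  -- f' ≥ 0 on [0, ∞)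
  have hf1nonneg : ∀ t ∈ Ici (0:ℝ), 0 ≤ deriv f t := by
    apply barrier hdf1
    · intro t ht hzero
      apply hf2pos t ht
      rw [hzero]; ring_nf; rfl
    · rw [hf0']; exact hb
  -- f' > 0 on (0, ∞)
  have hf1pos : ∀ t : ℝ, 0 < t → 0 < deriv f t := by
    intro t ht
    rcases lt_or_eq_of_le (hf1nonneg t ht.le) with h | h
    · exact h
    · exfalso
      have h2 : 0 < deriv (deriv f) t := by
        apply hf2pos t ht.le
        rw [← h]; ring_nf; rfl
      obtain ⟨s, hs1, hs2, hs3⟩ :=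
        exists_left_lt_of_deriv_pos (hdf1 t ht.le) h2 (half_lt_self ht)
      have : 0 ≤ deriv f s := hf1nonneg s (by linarith : (0:ℝ) ≤ s)
      rw [← h] at hs3
      linarith
  -- f strictly increasing on [0, ∞)
  have hcontf : ContinuousOn f (Ici (0:ℝ)) :=
    fun x hx => ((hdf x hx).continuousAt).continuousWithinAt
  have hfmono : StrictMonoOn f (Ici (0:ℝ)) := by
    apply strictMonoOn_of_deriv_pos (convex_Ici 0) hcontf
    intro x hx; rw [interior_Ici] at hx
    exact hf1pos x hx
  have hfmono' : MonotoneOn f (Ici (0:ℝ)) := hfmono.monotoneOn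
  -- f is unbounded above
  have hunb : ∀ K : ℝ, ∃ T, 0 ≤ T ∧ K < f T := by
    intro K
    by_contra hcon
    push_neg at hcon
    set M := max (-a) |K| + 1 with hMdef
    have hMpos : 0 < M := by
      have := abs_nonneg K
      have := le_max_right (-a) |K|
      linarith
    have habs : ∀ t ∈ Ici (0:ℝ), |f t| ≤ M := by
      intro t ht
      have h1 : a ≤ f t := by
        have := hfmono' self_mem_Ici ht ht
        rw [hf0] at this; exact this
      have h2 : f t ≤ K := hcon t ht
      rw [abs_le]
      constructor
      · have := le_max_left (-a) |K|; linarith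
      · have := le_abs_self K; have := le_max_right (-a) |K|; linarith
    set ε := E / (2 * α * M) with hεdef
    have hεpos : 0 < ε := by
      apply div_pos hEpos; positivity
    set c := (E/2) ^ n⁻¹ with hcdef
    have hcpos : 0 < c := Real.rpow_pos_of_pos (by linarith) _
    have hclaim1 : ∀ t ∈ Ici (0:ℝ), deriv f t ≤ ε → c ≤ deriv (deriv f) t := by
      intro t ht hft
      have hf1n := hf1nonneg t ht
      have h1 : α * f t * deriv f t ≤ E/2 := by
        have hfM : f t ≤ M := (abs_le.1 (habs t ht)).2
        have h2 : f t * deriv f t ≤ M * deriv f t :=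
          mul_le_mul_of_nonneg_right hfM hf1n
        have h3 : M * deriv f t ≤ M * ε := mul_le_mul_of_nonneg_left hft hMpos.le
        have h4 : α * (f t * deriv f t) ≤ α * (M * ε) := by
          apply mul_le_mul_of_nonneg_left _ hα.le
          linarith
        have h5 : α * (M * ε) = E/2 := by
          rw [hεdef]; field_simp
        calc α * f t * deriv f t = α * (f t * deriv f t) := by ring
        _ ≤ α * (M * ε) := h4
        _ = E/2 := h5
      have h2 : E/2 ≤ powLaw n (deriv (deriv f) t) := by
        linarith [hkeyIneq t ht]
      have h3 : powLaw n c = E/2 := powLaw_rpow_inv hn (by linarith)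
      rw [← h3] at h2
      exact (powLaw_le_iff hn).1 h2
    have hclaim2 : ∃ T1, 0 ≤ T1 ∧ ε ≤ deriv f T1 := by
      by_contra hcon2
      push_neg at hcon2
      have hall : ∀ t ∈ Ici (0:ℝ), c ≤ deriv (deriv f) t := by
        intro t ht
        exact hclaim1 t ht (hcon2 t ht).le
      have hgrow := growth_ge hdf1 hall (ε/c) (mem_Ici.2 (by positivity))
      rw [hf0'] at hgrow
      have : ε ≤ deriv f (ε/c) := by
        have hc' : c * (ε/c - 0) = ε := by field_simp; ring
        rw [hc'] at hgrow
        linarith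
      have := hcon2 (ε/c) (by positivity)
      linarith
    obtain ⟨T1, hT10, hT1ε⟩ := hclaim2
    have hbar : ∀ t ∈ Ici T1, ε ≤ deriv f t := by
      apply barrier (fun t ht => hdf1 t (le_trans hT10 ht))
      · intro t ht hzero
        have : c ≤ deriv (deriv f) t := hclaim1 t (le_trans hT10 ht) (le_of_eq hzero)
        linarith
      · exact hT1ε
    have hgrow2 := growth_ge (fun t ht => hdf t (le_trans hT10 ht)) hbar
    set tb := T1 + (K - f T1)/ε + 1 with htbdef
    have hKfT1 : f T1 ≤ K := hcon T1 hT10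
    have htb : T1 ≤ tb := by
      have : 0 ≤ (K - f T1)/ε := div_nonneg (by linarith) hεpos.le
      rw [htbdef]; linarith
    have h5 := hgrow2 tb htb
    have h6 : ε * (tb - T1) = K - f T1 + ε := by
      rw [htbdef]; field_simp; ring
    have h7 : f tb ≤ K := hcon tb (by linarith)
    rw [h6] at h5
    linarith
  -- f tends to infinity
  have htop : Tendsto f atTop atTop := by
    rw [tendsto_atTop]
    intro K
    obtain ⟨T, hT0, hTK⟩ := hunb K
    filter_upwards [eventually_ge_atTop T] with t ht
    have := hfmono' (mem_Ici.2 hT0) (mem_Ici.2 (le_trans hT0 ht)) ht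
    linarith
  -- unique zero
  have hzero : ∃! t : ℝ, 0 < t ∧ f t = 0 := by
    obtain ⟨T, hT0, hTpos⟩ := hunb 0
    have hT0' : 0 < T := by
      rcases lt_or_eq_of_le hT0 with h | h
      · exact h
      · exfalso; rw [← h, hf0] at hTpos; linarith
    have hiv := intermediate_value_Ioo hT0 (hcontf.mono (Icc_subset_Ici_self))
    have h0mem : (0:ℝ) ∈ Ioo (f 0) (f T) := by
      rw [hf0]; exact ⟨ha, hTpos⟩
    obtain ⟨t, htmem, hft⟩ := hiv h0mem
    refine ⟨t, ⟨htmem.1, hft⟩, ?_⟩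
    rintro t' ⟨ht'1, hft'⟩
    exact hfmono.injOn (le_of_lt ht'1) (le_of_lt htmem.1) (by rw [hft', hft])
  -- there is a point where f'' ≤ 0
  have hcase : ∃ t₀, 0 < t₀ ∧ deriv (deriv f) t₀ ≤ 0 := by
    by_contra hcon
    push_neg at hcon
    set δ := deriv f 1 with hδdef
    have hδ : 0 < δ := hf1pos 1 one_pos
    have hf1mono : MonotoneOn (deriv f) (Ici (1:ℝ)) := by
      apply monotoneOn_of_deriv_nonneg (convex_Ici 1)
      · exact fun x hx => ((hdf1 x (le_trans (zero_le_one : (0:ℝ) ≤ 1) hx)).continuousAt).continuousWithinAt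
      · intro x hx; rw [interior_Ici] at hx
        exact (hdf1 x (by linarith [mem_Ioi.1 hx] : (0:ℝ) ≤ x)).differentiableWithinAt
      · intro x hx; rw [interior_Ici] at hx
        exact (hcon x (by linarith [mem_Ioi.1 hx])).le
    have hf1ge : ∀ t ∈ Ici (1:ℝ), δ ≤ deriv f t :=
      fun t ht => hf1mono self_mem_Ici ht ht
    have hfge := growth_ge (fun t ht => hdf t (le_trans (zero_le_one : (0:ℝ) ≤ 1) ht)) hf1ge
    obtain ⟨T0, hT00, hT0pos⟩ := hunb 0
    set T := max T0 1 with hTdef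
    have hT1 : (1:ℝ) ≤ T := le_max_right _ _
    have hTnn : (0:ℝ) ≤ T := le_trans zero_le_one hT1
    have hfT : 0 < f T := by
      have := hfmono' (mem_Ici.2 hT00) (mem_Ici.2 hTnn) (le_max_left T0 1)
      linarith
    have hfnn : ∀ t ∈ Ici T, 0 ≤ f t := by
      intro t ht
      have := hfmono' (mem_Ici.2 hTnn) (mem_Ici.2 (le_trans hTnn ht)) ht
      linarith
    set Ψ : ℝ → ℝ := fun s => G s - (α + m) * (f s * deriv f s) with hΨdef
    have hΨd : ∀ t ∈ Ici T, HasDerivAt Ψ (-((α+m) * (f t * deriv (deriv f) t))) t := by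
      intro t ht
      have ht0 : t ∈ Ici (0:ℝ) := le_trans hTnn ht
      have h1 : HasDerivAt f (deriv f t) t := (hdf t ht0).hasDerivAt
      have h2 : HasDerivAt (deriv f) (deriv (deriv f) t) t := (hdf1 t ht0).hasDerivAt
      have h4 := (hG t ht0).sub ((h1.mul h2).const_mul (α+m))
      refine h4.congr_deriv ?_
      ring
    have hΨanti : AntitoneOn Ψ (Ici T) := by
      apply antitoneOn_of_deriv_nonpos (convex_Ici T)
      · exact fun x hx => ((hΨd x hx).differentiableAt.continuousAt).continuousWithinAt
      · intro x hx; rw [interior_Ici] at hx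
        exact (hΨd x (le_of_lt (mem_Ioi.1 hx))).differentiableAt.differentiableWithinAt
      · intro x hx; rw [interior_Ici] at hx
        have hx' := mem_Ioi.1 hx
        rw [(hΨd x (le_of_lt (mem_Ioi.1 hx))).deriv]
        have hfx : 0 ≤ f x := hfnn x (le_of_lt (mem_Ioi.1 hx))
        have hf2x : 0 < deriv (deriv f) x := hcon x (by linarith)
        nlinarith [mul_nonneg hfx hf2x.le, hαm]
    have hhle : ∀ t ∈ Ici T, powLaw n (deriv (deriv f) t) ≤ Ψ T + m * (f t * deriv f t) := by
      intro t ht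
      have h1 := hΨanti self_mem_Ici ht ht
      have h2 : Ψ t = powLaw n (deriv (deriv f) t) + α * f t * deriv f t
          - (α + m) * (f t * deriv f t) := rfl
      linarith
    have hprod : ∀ t ∈ Ici T, m * (f t * deriv f t) ≤ m * δ * (f 1 + δ * (t - 1)) := by
      intro t ht
      have ht1 : t ∈ Ici (1:ℝ) := le_trans hT1 ht
      have e1 : f 1 + δ * (t - 1) ≤ f t := hfge t ht1
      have e2 : δ ≤ deriv f t := hf1ge t ht1
      have e3 : 0 ≤ f t := hfnn t ht
      have e4 : (f 1 + δ * (t - 1)) * δ ≤ f t * deriv f t :=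
        mul_le_mul e1 e2 hδ.le e3
      have e5 : m * (f t * deriv f t) ≤ m * ((f 1 + δ * (t - 1)) * δ) :=
        mul_le_mul_of_nonpos_left e4 hm₂.le
      nlinarith [e5]
    set C := Ψ T + m * δ * (f 1 - δ) with hCdef
    set sl := m * δ * δ with hsldef
    have hslneg : sl < 0 := by
      rw [hsldef]
      have := mul_pos hδ hδ
      nlinarith
    have hlin : ∀ t ∈ Ici T, powLaw n (deriv (deriv f) t) ≤ C + sl * t := by
      intro t ht
      have := hhle t ht
      have := hprod t ht
      have heq : Ψ T + m * δ * (f 1 + δ * (t - 1)) = C + sl * t := by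
        rw [hCdef, hsldef]; ring
      linarith
    set tbb := max T ((C + 1)/(-sl)) with htbbdef
    have htbbT : T ≤ tbb := le_max_left _ _
    have h1 := hlin tbb htbbT
    have h2 : sl * tbb ≤ sl * ((C + 1)/(-sl)) :=
      mul_le_mul_of_nonpos_left (le_max_right _ _) hslneg.le
    have h3 : sl * ((C + 1)/(-sl)) = -(C + 1) := by
      have hne : sl ≠ 0 := ne_of_lt hslneg
      rw [div_neg, mul_neg, mul_div_cancel₀ _ hne]
    have h4 : 0 < powLaw n (deriv (deriv f) tbb) :=
      powLaw_pos hn (hcon tbb (by linarith [lt_of_lt_of_le one_pos (le_trans hT1 htbbT)]))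
    linarith
  obtain ⟨t₀, ht₀pos, ht₀f2⟩ := hcase
  -- f'' ≤ 0 on [t₀, ∞)
  have hf2nonpos : ∀ t ∈ Ici t₀, deriv (deriv f) t ≤ 0 := by
    have hbar : ∀ t ∈ Ici t₀, 0 ≤ -H t := by
      apply barrier
      · exact fun t ht => (hdH t (le_trans ht₀pos.le ht)).neg
      · intro t ht hzero
        have ht0 : t ∈ Ici (0:ℝ) := le_trans ht₀pos.le ht
        have hHt : H t = 0 := by linarith [neg_eq_zero.1 hzero]
        have hf2t : deriv (deriv f) t = 0 := by
          apply (powLaw_strictMono hn).injective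
          rw [powLaw_zero]
          exact hHt
        have hderivneg : deriv (fun s => -H s) t = -(deriv H t) :=
          ((hdH t ht0).hasDerivAt).neg.deriv
        have hdH2 : deriv H t = m * (deriv f t)^2 := by
          have := heqn t ht0
          rw [hf2t] at this
          nlinarith [this]
        rw [hderivneg, hdH2]
        have hf1t := hf1pos t (lt_of_lt_of_le ht₀pos ht)
        nlinarith [mul_pos hf1t hf1t]
      · have : powLaw n (deriv (deriv f) t₀) ≤ powLaw n 0 := (powLaw_le_iff hn).2 ht₀f2
        rw [powLaw_zero] at this
        simp only [hHdef]
        linarith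
    intro t ht
    have := hbar t ht
    have h2 : powLaw n (deriv (deriv f) t) ≤ powLaw n 0 := by
      rw [powLaw_zero]
      simp only [hHdef] at this
      linarith
    exact (powLaw_le_iff hn).1 h2
  -- f' antitone on [t₀, ∞)
  have hf1anti : AntitoneOn (deriv f) (Ici t₀) := by
    apply antitoneOn_of_deriv_nonpos (convex_Ici t₀)
    · exact fun x hx => ((hdf1 x (le_trans ht₀pos.le hx)).continuousAt).continuousWithinAt
    · intro x hx; rw [interior_Ici] at hx
      exact (hdf1 x (le_trans ht₀pos.le (le_of_lt hx))).differentiableWithinAt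
    · intro x hx; rw [interior_Ici] at hx
      exact hf2nonpos x (le_of_lt (mem_Ioi.1 hx))
  -- f' gets arbitrarily small
  have hsmall : ∀ ε : ℝ, 0 < ε → ∃ T, t₀ ≤ T ∧ deriv f T < ε := by
    intro ε hε
    by_contra hcon2
    push_neg at hcon2
    set S := deriv f '' Ici t₀ with hSdef
    have hSne : S.Nonempty := ⟨deriv f t₀, t₀, self_mem_Ici, rfl⟩
    have hSbdd : BddBelow S := by
      refine ⟨0, ?_⟩
      rintro x ⟨t, ht, rfl⟩
      exact hf1nonneg t (le_trans ht₀pos.le ht)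
    set γ := sInf S with hγdef
    have hγε : ε ≤ γ := by
      apply le_csInf hSne
      rintro x ⟨t, ht, rfl⟩
      exact hcon2 t ht
    have hγpos : 0 < γ := lt_of_lt_of_le hε hγε
    have hγle : ∀ t ∈ Ici t₀, γ ≤ deriv f t := fun t ht => csInf_le hSbdd ⟨t, ht, rfl⟩
    have hratio : 1 < α / (α + m) := (one_lt_div hαm).2 (by linarith)
    have hsq : 1 < Real.sqrt (α / (α + m)) := by
      rw [show (1:ℝ) = Real.sqrt 1 from Real.sqrt_one.symm]
      exact Real.sqrt_lt_sqrt (by norm_num) hratio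
    set r := Real.sqrt (α / (α + m)) * γ with hrdef
    have hrγ : γ < r := by nlinarith
    obtain ⟨x, hx1, hx2⟩ := (csInf_lt_iff hSbdd hSne).1 (show sInf S < r from hrγ)
    obtain ⟨t₁, ht₁, rfl⟩ := hx1
    obtain ⟨T0', hT00', hT0pos'⟩ := hunb 0
    set t₂ := max t₁ T0' with ht₂def
    have ht₂t₀ : t₀ ≤ t₂ := le_trans ht₁ (le_max_left _ _)
    have ht₂0 : (0:ℝ) ≤ t₂ := le_trans ht₀pos.le ht₂t₀
    have hft₂nn : ∀ t ∈ Ici t₂, 0 ≤ f t := by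
      intro t ht
      have := hfmono' (mem_Ici.2 hT00') (mem_Ici.2 (le_trans ht₂0 ht))
        (le_trans (le_max_right t₁ T0') ht)
      linarith
    have hf1B₂ : ∀ t ∈ Ici t₂, deriv f t ≤ deriv f t₁ := fun t ht =>
      hf1anti ht₁ (le_trans ht₂t₀ ht) (le_trans (le_max_left t₁ T0') ht)
    have hGd2 : ∀ t ∈ Ici t₂, G t ≤ G t₂ + ((α + m) * (deriv f t₁)^2) * (t - t₂) := by
      apply growth_le (fun t ht => hGdiff t (le_trans ht₂0 ht))
      intro t ht
      rw [hGderiv t (le_trans ht₂0 ht)]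
      have h1 : 0 ≤ deriv f t := hf1nonneg t (le_trans ht₂0 ht)
      have h2 : deriv f t ≤ deriv f t₁ := hf1B₂ t ht
      have h3 : (deriv f t)^2 ≤ (deriv f t₁)^2 := by nlinarith
      nlinarith
    have hfgrow : ∀ t ∈ Ici t₂, f t₂ + γ * (t - t₂) ≤ f t :=
      growth_ge (fun t ht => hdf t (le_trans ht₂0 ht))
        (fun t ht => hγle t (le_trans ht₂t₀ ht))
    set C2 := G t₂ - α * γ * f t₂ with hC2def
    set s2 := (α + m) * (deriv f t₁)^2 - α * γ^2 with hs2def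
    have hs2neg : s2 < 0 := by
      have hB₂0 : 0 ≤ deriv f t₁ := hf1nonneg t₁ (le_trans ht₀pos.le ht₁)
      have hB₂sq : (deriv f t₁)^2 < r^2 := by nlinarith
      have hr2 : r^2 = (α / (α + m)) * γ^2 := by
        rw [hrdef, mul_pow, Real.sq_sqrt (le_of_lt (div_pos hα hαm))]
      have he : (α + m) * ((α / (α + m)) * γ^2) = α * γ^2 := by
        field_simp
      nlinarith [mul_lt_mul_of_pos_left hB₂sq hαm]
    have hlin2 : ∀ t ∈ Ici t₂, powLaw n (deriv (deriv f) t) ≤ C2 + s2 * (t - t₂) := by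
      intro t ht
      have e1 := hGd2 t ht
      have e2 := hfgrow t ht
      have e3 := hγle t (le_trans ht₂t₀ ht)
      have e4 := hft₂nn t ht
      have e5 : G t = powLaw n (deriv (deriv f) t) + α * f t * deriv f t := rfl
      have e6 : (f t₂ + γ * (t - t₂)) * γ ≤ f t * deriv f t :=
        mul_le_mul e2 e3 hγpos.le e4
      have e7 : α * ((f t₂ + γ * (t - t₂)) * γ) ≤ α * (f t * deriv f t) :=
        mul_le_mul_of_nonneg_left e6 hα.le
      rw [hC2def, hs2def]
      nlinarith [e1, e5, e7]
    set D := (|C2| + 1) / (-s2) with hDdef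
    have hDnn : 0 ≤ D := by
      rw [hDdef]
      apply div_nonneg _ (by linarith)
      have := abs_nonneg C2
      linarith
    have hsD : s2 * D = -(|C2| + 1) := by
      have hne : s2 ≠ 0 := ne_of_lt hs2neg
      rw [hDdef, div_neg, mul_neg, mul_div_cancel₀ _ hne]
    set Tb := t₂ + D with hTbdef
    have hTbt₂ : t₂ ≤ Tb := by rw [hTbdef]; linarith
    have hpow1 : powLaw n (-1 : ℝ) = -1 := by
      rw [show (-1:ℝ) = -(1:ℝ) from rfl, powLaw_neg_eq, powLaw_of_nonneg hn zero_le_one,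
        Real.one_rpow]
    have hf2le : ∀ t ∈ Ici Tb, deriv (deriv f) t ≤ -1 := by
      intro t ht
      have e1 := hlin2 t (le_trans hTbt₂ ht)
      have ht' : Tb ≤ t := ht
      have e2 : s2 * (t - t₂) ≤ s2 * D := by
        apply mul_le_mul_of_nonpos_left _ hs2neg.le
        rw [hTbdef] at ht'
        linarith
      have e4 : C2 ≤ |C2| := le_abs_self C2
      have e5 : powLaw n (deriv (deriv f) t) ≤ powLaw n (-1:ℝ) := by
        rw [hpow1]; linarith [hsD]
      exact (powLaw_le_iff hn).1 e5
    have hTb0 : (0:ℝ) ≤ Tb := le_trans ht₂0 hTbt₂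
    have hgr := growth_le (fun t ht => hdf1 t (le_trans hTb0 ht)) hf2le
    set tstar := Tb + deriv f Tb + 1 with htstardef
    have hfTb : 0 ≤ deriv f Tb := hf1nonneg Tb hTb0
    have htstar : Tb ≤ tstar := by rw [htstardef]; linarith
    have h6 := hgr tstar htstar
    have h7 : deriv f Tb + (-1) * (tstar - Tb) = -1 := by rw [htstardef]; ring
    have h8 := hf1nonneg tstar (le_trans hTb0 htstar)
    rw [h7] at h6
    linarith
  -- f' tends to 0
  have h1tendsto : Tendsto (deriv f) atTop (nhds 0) := by
    refine tendsto_order.2 ⟨?_, ?_⟩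
    · intro x hx
      filter_upwards [eventually_ge_atTop (0:ℝ)] with t ht
      have := hf1nonneg t ht
      linarith
    · intro x hx
      obtain ⟨T, hTt₀, hfT⟩ := hsmall x hx
      filter_upwards [eventually_ge_atTop T] with t ht
      have := hf1anti hTt₀ (le_trans hTt₀ ht) ht
      linarith
  -- f'' tends to 0
  have h2tendsto : Tendsto (deriv (deriv f)) atTop (nhds 0) := by
    refine tendsto_order.2 ⟨?_, ?_⟩
    · intro x hx
      set c := -x/2 with hcdef2
      have hcpos2 : 0 < c := by rw [hcdef2]; linarith
      set η := powLaw n c with hηdef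
      have hηpos : 0 < η := powLaw_pos hn hcpos2
      set B := deriv f t₀ with hBdef
      have hBge : ∀ t ∈ Ici t₀, deriv f t ≤ B := fun t ht => hf1anti self_mem_Ici ht ht
      have hB0 : 0 ≤ B := hf1nonneg t₀ ht₀pos.le
      set F₀ := (1 - m * B^2) / (α * c) with hF₀def
      have hnum : 0 < 1 - m * B^2 := by nlinarith [sq_nonneg B]
      have hF₀pos : 0 < F₀ := div_pos hnum (by positivity)
      obtain ⟨T', hT'0, hT'F⟩ := hunb F₀
      set T₂ := max T' t₀ with hT₂def
      have hT₂t₀ : t₀ ≤ T₂ := le_max_right _ _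
      have hT₂0 : (0:ℝ) ≤ T₂ := le_trans ht₀pos.le hT₂t₀
      have hfF₀ : ∀ t ∈ Ici T₂, F₀ ≤ f t := by
        intro t ht
        have := hfmono' (mem_Ici.2 hT'0) (mem_Ici.2 (le_trans hT₂0 ht))
          (le_trans (le_max_left T' t₀) ht)
        linarith
      have keyd : ∀ t ∈ Ici T₂, H t ≤ -η → 1 ≤ deriv H t := by
        intro t ht hHle
        have ht₀' : t ∈ Ici t₀ := le_trans hT₂t₀ ht
        have ht0 : t ∈ Ici (0:ℝ) := le_trans hT₂0 ht
        have hf2c : deriv (deriv f) t ≤ -c := by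
          apply (powLaw_le_iff hn).1
          rw [powLaw_neg_eq]
          exact hHle
        have hfF : F₀ ≤ f t := hfF₀ t ht
        have hf'B : deriv f t ≤ B := hBge t ht₀'
        have hf'0 : 0 ≤ deriv f t := hf1nonneg t ht0
        have hderivH : deriv H t = m * (deriv f t)^2 - α * f t * deriv (deriv f) t := by
          linarith [heqn t ht0]
        rw [hderivH]
        have hft0 : 0 ≤ f t := le_trans hF₀pos.le hfF
        have e1 : α * f t * c ≤ α * f t * (-(deriv (deriv f) t)) := by
          apply mul_le_mul_of_nonneg_left _ (mul_nonneg hα.le hft0)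
          linarith
        have e2 : α * F₀ * c ≤ α * f t * c :=
          mul_le_mul_of_nonneg_right (mul_le_mul_of_nonneg_left hfF hα.le) hcpos2.le
        have e3 : α * F₀ * c = 1 - m * B^2 := by
          rw [hF₀def]
          field_simp
        have e4 : m * B^2 ≤ m * (deriv f t)^2 :=
          mul_le_mul_of_nonpos_left (pow_le_pow_left₀ hf'0 hf'B 2) hm₂.le
        nlinarith [e1, e2, e3, e4]
      have claimA : ∃ T₃, T₂ ≤ T₃ ∧ -η ≤ H T₃ := by
        by_contra hcon3
        push_neg at hcon3
        have hge : ∀ t ∈ Ici T₂, 1 ≤ deriv H t :=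
          fun t ht => keyd t ht (hcon3 t ht).le
        have hgr2 := growth_ge (fun t ht => hdH t (le_trans hT₂0 ht)) hge
        set q := -η - H T₂ with hqdef
        have hq : 0 < q := by
          have := hcon3 T₂ le_rfl
          rw [hqdef]; linarith
        have h5 := hgr2 (T₂ + q) (mem_Ici.2 (by linarith))
        have h6 : H T₂ + 1 * (T₂ + q - T₂) = -η := by rw [hqdef]; ring
        rw [h6] at h5
        have := hcon3 (T₂ + q) (by linarith)
        linarith
      obtain ⟨T₃, hT₃T₂, hT₃η⟩ := claimA
      have claimB : ∀ t ∈ Ici T₃, -η ≤ H t := by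
        apply barrier (fun t ht => hdH t (le_trans (le_trans hT₂0 hT₃T₂) ht))
        · intro t ht heq
          have := keyd t (le_trans hT₃T₂ ht) (le_of_eq heq)
          linarith
        · exact hT₃η
      filter_upwards [eventually_ge_atTop T₃] with t ht
      have h1 := claimB t ht
      have h2 : -c ≤ deriv (deriv f) t := by
        apply (powLaw_le_iff hn).1
        rw [powLaw_neg_eq]
        exact h1
      rw [hcdef2] at h2
      linarith
    · intro x hx
      filter_upwards [eventually_ge_atTop t₀] with t ht
      have := hf2nonpos t ht
      linarith
  exact ⟨hzero, htop, h1tendsto, h2tendsto⟩
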